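/- Let G be a k-uniform unicyclic hypergraph of size m whose unique cycle has length at least 3 (k ≥ 3). Then σ(G) ≥ (k−1)m[(k−1)m − 1 − k/2], with equality if and only if the diameter of G is at most 2. -/

import Mathlib

open Finset

/-- A (finite) hypergraph: a finite vertex set together with a finite family of edges,
each edge being a finite set of vertices. -/
structure FinHypergraph (α : Type) where
  verts : Finset α
  edges : Finset (Finset α)

namespace FinHypergraph

variable {α β : Type}

/-- Every edge is a subset of the vertex set. -/
def Good (G : FinHypergraph α) : Prop := ∀ e ∈ G.edges, e ⊆ G.verts

/-- `k`-uniform: every edge has cardinality `k`. -/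
def Uniform (G : FinHypergraph α) (k : ℕ) : Prop := ∀ e ∈ G.edges, e.card = k

/-- A walk of length `p` from `u` to `v`: an alternating sequence of vertices and edges,
with consecutive vertices distinct and both lying in the connecting edge. -/
inductive Walk (G : FinHypergraph α) : α → α → ℕ → Prop
  | nil (v : α) : Walk G v v 0
  | cons {u w : α} (v : α) {p : ℕ} (e : Finset α) (he : e ∈ G.edges)
      (hu : u ∈ e) (hv : v ∈ e) (hne : u ≠ v) (hw : Walk G v w p) :
      Walk G u w (p + 1)

def Connected (G : FinHypergraph α) : Prop :=
  ∀ u ∈ G.verts, ∀ v ∈ G.verts, ∃ p, G.Walk u v p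

/-- Distance: length of a shortest walk (equivalently, of a shortest path). -/
noncomputable def dist (G : FinHypergraph α) (u v : α) : ℕ := sInf {p | G.Walk u v p}

/-- `σ_G(u) = ∑_{v ∈ V(G)} d_G(u,v)`. -/
noncomputable def transFrom [DecidableEq α] (G : FinHypergraph α) (u : α) : ℕ :=
  ∑ v ∈ G.verts, G.dist u v

/-- The transmission `σ(G)`: the sum of distances over all unordered pairs of
distinct vertices (distances being symmetric, this is half the sum over ordered pairs). -/
noncomputable def trans [DecidableEq α] (G : FinHypergraph α) : ℕ :=
  (∑ u ∈ G.verts, ∑ v ∈ G.verts, G.dist u v) / 2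

/-- `σ_G(A,B) = ∑_{a ∈ A, b ∈ B} d_G(a,b)`. -/
noncomputable def transBetween [DecidableEq α] (G : FinHypergraph α) (A B : Finset α) : ℕ :=
  ∑ a ∈ A, ∑ b ∈ B, G.dist a b

/-- The diameter: the maximum distance between two vertices. -/
noncomputable def diam (G : FinHypergraph α) : ℕ :=
  G.verts.sup fun u => G.verts.sup fun v => G.dist u v

/-- The degree of a vertex: the number of edges containing it. -/
def degree [DecidableEq α] (G : FinHypergraph α) (v : α) : ℕ :=
  (G.edges.filter fun e => v ∈ e).card

/-- A cycle of length `n+2` in `G`: vertices `v 0, …, v (n+1)` (all distinct) and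
distinct edges `e 0, …, e (n+1)` of `G` with `v i, v (i+1) ∈ e i` (indices mod `n+2`). -/
structure Cycle (G : FinHypergraph α) where
  n : ℕ
  v : Fin (n + 2) → α
  e : Fin (n + 2) → Finset α
  he : ∀ i, e i ∈ G.edges
  einj : Function.Injective e
  vinj : Function.Injective v
  mem_fst : ∀ i, v i ∈ e i
  mem_snd : ∀ i, v (i + 1) ∈ e i

/-- The length of a cycle (its number of edges). -/
def Cycle.length {G : FinHypergraph α} (C : G.Cycle) : ℕ := C.n + 2

/-- The set of edges of a cycle. -/
def Cycle.edgeFinset [DecidableEq α] {G : FinHypergraph α} (C : G.Cycle) : Finset (Finset α) :=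
  Finset.univ.image C.e

/-- Unicyclic: connected with exactly one cycle (all cycles have the same edge set). -/
def Unicyclic [DecidableEq α] (G : FinHypergraph α) : Prop :=
  G.Connected ∧ Nonempty G.Cycle ∧ ∀ C C' : G.Cycle, C.edgeFinset = C'.edgeFinset

/-- Isomorphism of hypergraphs. -/
def Isomorphic [DecidableEq β] (G : FinHypergraph α) (H : FinHypergraph β) : Prop :=
  ∃ f : α → β, Set.BijOn f ↑G.verts ↑H.verts ∧
    ∀ e : Finset α, e ⊆ G.verts → (e ∈ G.edges ↔ e.image f ∈ H.edges)

/-- Rename the vertices of a hypergraph along `f`. -/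
def mapHG [DecidableEq β] (f : α → β) (G : FinHypergraph α) : FinHypergraph β :=
  ⟨G.verts.image f, G.edges.image (Finset.image f)⟩

def unionHG [DecidableEq α] (G H : FinHypergraph α) : FinHypergraph α :=
  ⟨G.verts ∪ H.verts, G.edges ∪ H.edges⟩

def unionMany [DecidableEq α] {n : ℕ} (Hs : Fin n → FinHypergraph α) : FinHypergraph α :=
  ⟨Finset.univ.biUnion fun i => (Hs i).verts, Finset.univ.biUnion fun i => (Hs i).edges⟩

/-- Move the edge `e` from `u` to `x`: replace `e` by `(e \ {u}) ∪ {x}`. -/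
def moveEdge [DecidableEq α] (G : FinHypergraph α) (e : Finset α) (u x : α) : FinHypergraph α :=
  ⟨G.verts, insert (insert x (e.erase u)) (G.edges.erase e)⟩

/-- Move each edge of `S` from `u` to `x`. -/
def moveEdges [DecidableEq α] (G : FinHypergraph α) (S : Finset (Finset α)) (u x : α) :
    FinHypergraph α :=
  ⟨G.verts, (G.edges \ S) ∪ S.image fun e => insert x (e.erase u)⟩

/-- Delete a set of edges (keeping all vertices). -/
def deleteEdges [DecidableEq α] (G : FinHypergraph α) (S : Finset (Finset α)) : FinHypergraph α :=
  ⟨G.verts, G.edges \ S⟩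

open Classical in
/-- The vertex set of the component of `G` containing `u`. -/
noncomputable def component (G : FinHypergraph α) (u : α) : Finset α :=
  G.verts.filter fun x => ∃ p, G.Walk u x p

/-- The component of `G` containing `u`, as a hypergraph. -/
noncomputable def componentHG [DecidableEq α] (G : FinHypergraph α) (u : α) : FinHypergraph α :=
  ⟨G.component u, G.edges.filter fun e => e ⊆ G.component u⟩

/-- The `k`-uniform loose cycle with `m` edges `e_0, …, e_{m-1}`,
consecutive edges sharing exactly one vertex. -/
def looseCycle (m k : ℕ) : FinHypergraph ℕ where
  verts := Finset.range (m * (k - 1))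
  edges := (Finset.range m).image fun i =>
    (Finset.range k).image fun j => (i * (k - 1) + j) % (m * (k - 1))

/-- `C^k_2(t,s)`: two `k`-edges sharing exactly the two vertices `0,1`, with a hyperstar of
`t` edges attached at `0` and a hyperstar of `s` edges attached at `1`. -/
def Ck2 (k t s : ℕ) : FinHypergraph ℕ where
  verts := Finset.range ((t + s + 2) * (k - 1))
  edges :=
    {Finset.range k, insert 0 (insert 1 (Finset.Ico k (2 * k - 2)))} ∪
    ((Finset.range t).image fun i =>
      insert 0 (Finset.Ico (2 * k - 2 + i * (k - 1)) (2 * k - 2 + (i + 1) * (k - 1)))) ∪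
    ((Finset.range s).image fun j =>
      insert 1 (Finset.Ico (2 * k - 2 + t * (k - 1) + j * (k - 1))
        (2 * k - 2 + t * (k - 1) + (j + 1) * (k - 1))))

/-- `C̃^k_2(p,q)`: the loose 2-cycle on the two `k`-edges `{0,…,k-1}` and
`{0,1} ∪ {k,…,2k-3}` (sharing exactly `0,1`), with a pendant path of length `p`
attached at the degree-one vertex `2` of the first edge and a pendant path of length `q`
attached at the degree-one vertex `k` of the second edge. -/
def Ctilde (k p q : ℕ) : FinHypergraph ℕ where
  verts := Finset.range ((p + q + 2) * (k - 1))
  edges :=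
    {Finset.range k, insert 0 (insert 1 (Finset.Ico k (2 * k - 2)))} ∪
    ((Finset.range p).image fun i =>
      insert (if i = 0 then 2 else 2 * k - 2 + i * (k - 1) - 1)
        (Finset.Ico (2 * k - 2 + i * (k - 1)) (2 * k - 2 + (i + 1) * (k - 1)))) ∪
    ((Finset.range q).image fun j =>
      insert (if j = 0 then k else 2 * k - 2 + p * (k - 1) + j * (k - 1) - 1)
        (Finset.Ico (2 * k - 2 + p * (k - 1) + j * (k - 1))
          (2 * k - 2 + p * (k - 1) + (j + 1) * (k - 1))))

/-- The triangle with one pendant edge, `C^2_3(1,0,0)`. -/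
def triPendant : FinHypergraph ℕ :=
  ⟨Finset.range 4, {{0, 1}, {1, 2}, {0, 2}, {0, 3}}⟩

/-- `G_{u,v}(p,q)`: attach a loose pendant path of `p` `k`-edges at `u` and a loose pendant
path of `q` `k`-edges at `v`, using fresh vertices (the `Sum.inr` side). -/
def attachTwoPathsAt [DecidableEq α] (k : ℕ) (G : FinHypergraph α) (u v : α) (p q : ℕ) :
    FinHypergraph (α ⊕ ℕ) where
  verts := G.verts.image Sum.inl ∪ (Finset.range ((p + q) * (k - 1))).image Sum.inr
  edges :=
    G.edges.image (Finset.image Sum.inl) ∪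
    ((Finset.range p).image fun i =>
      insert (if i = 0 then Sum.inl u else Sum.inr (i * (k - 1) - 1))
        ((Finset.Ico (i * (k - 1)) ((i + 1) * (k - 1))).image Sum.inr)) ∪
    ((Finset.range q).image fun j =>
      insert (if j = 0 then Sum.inl v else Sum.inr (p * (k - 1) + j * (k - 1) - 1))
        ((Finset.Ico (p * (k - 1) + j * (k - 1)) (p * (k - 1) + (j + 1) * (k - 1))).image
          Sum.inr))

/-- `G_u(p,q)`: attach two loose pendant paths, of lengths `p` and `q`, at `u`. -/
def attachTwoPaths [DecidableEq α] (k : ℕ) (G : FinHypergraph α) (u : α) (p q : ℕ) :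
    FinHypergraph (α ⊕ ℕ) :=
  attachTwoPathsAt k G u u p q

/-- `G_{e,s}(H_1,…,H_{k-1})`: given a pendant edge `e = {w 0, …, w (k-1)}` of `G` at
`w (k-1)`, identify the root `vr i` of `H i` with `w (k-1)` for (0-based) `i < s`, and with
`w i` for `i ≥ s`. -/
def Ges [DecidableEq α] (G : FinHypergraph α) (k : ℕ) (hk : 2 ≤ k) (w : Fin k → α)
    (H : Fin (k - 1) → FinHypergraph α) (vr : Fin (k - 1) → α) (s : ℕ) : FinHypergraph α :=
  unionHG G (unionMany fun i : Fin (k - 1) =>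
    mapHG (Function.update id (vr i)
      (if (i : ℕ) < s then w ⟨k - 1, by omega⟩ else w (Fin.castLE (Nat.sub_le k 1) i))) (H i))

end FinHypergraph

open FinHypergraph

namespace FinHypergraph

variable {α : Type} [DecidableEq α] {G : FinHypergraph α}

set_option linter.unusedSectionVars false

/-- Append one step at the end of a walk. -/
lemma Walk.snoc' {u v : α} {p : ℕ} (h : G.Walk u v p) :
    ∀ {w : α} {e : Finset α}, e ∈ G.edges → v ∈ e → w ∈ e → v ≠ w → G.Walk u w (p + 1) := by
  induction h with
  | nil x => intro w e he hv hw hne; exact Walk.cons w e he hv hw hne (Walk.nil w)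
  | cons v e' he' hu hv' hne' hwalk ih =>
      intro w e he hv hw hne
      exact Walk.cons v e' he' hu hv' hne' (ih he hv hw hne)

lemma Walk.snoc {u v w : α} {p : ℕ} (h : G.Walk u v p) (e : Finset α) (he : e ∈ G.edges)
    (hv : v ∈ e) (hw : w ∈ e) (hne : v ≠ w) : G.Walk u w (p + 1) :=
  h.snoc' he hv hw hne

/-- Walks can be reversed. -/
lemma Walk.symm {u v : α} {p : ℕ} (h : G.Walk u v p) : G.Walk v u p := by
  induction h with
  | nil x => exact Walk.nil x
  | cons v e he hu hv hne hwalk ih =>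
      exact ih.snoc e he hv hu (Ne.symm hne)

lemma dist_self (u : α) : G.dist u u = 0 :=
  Nat.eq_zero_of_le_zero (Nat.sInf_le (Walk.nil u))

lemma dist_le {u v : α} {p : ℕ} (h : G.Walk u v p) : G.dist u v ≤ p := Nat.sInf_le h

lemma walk_dist {u v : α} {p : ℕ} (h : G.Walk u v p) : G.Walk u v (G.dist u v) :=
  Nat.sInf_mem ⟨p, h⟩

lemma dist_comm (u v : α) : G.dist u v = G.dist v u := by
  rcases Set.eq_empty_or_nonempty {p | G.Walk u v p} with h | h
  · rcases Set.eq_empty_or_nonempty {p | G.Walk v u p} with h' | h'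
    · unfold dist; rw [h, h']
    · obtain ⟨p, hp⟩ := h'
      exact absurd (Walk.symm hp) (by intro hc; exact Set.eq_empty_iff_forall_notMem.mp h _ hc)
  · obtain ⟨p, hp⟩ := h
    exact le_antisymm (dist_le (Walk.symm (walk_dist (Walk.symm hp))))
      (Nat.sInf_le (Walk.symm (walk_dist hp)))

lemma eq_of_dist_eq_zero {u v : α} (hne : {p | G.Walk u v p}.Nonempty)
    (h : G.dist u v = 0) : u = v := by
  have hw : G.Walk u v (G.dist u v) := Nat.sInf_mem hne
  rw [h] at hw
  cases hw; rfl

lemma dist_eq_one_iff {u v : α} (hne : {p | G.Walk u v p}.Nonempty) :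
    G.dist u v = 1 ↔ u ≠ v ∧ ∃ e ∈ G.edges, u ∈ e ∧ v ∈ e := by
  constructor
  · intro h
    have hw : G.Walk u v (G.dist u v) := Nat.sInf_mem hne
    rw [h] at hw
    cases hw with
    | cons x e he hu hv hnex hwalk =>
        cases hwalk
        exact ⟨hnex, e, he, hu, hv⟩
  · rintro ⟨hne', e, he, hu, hv⟩
    have h1 : G.Walk u v 1 := Walk.cons v e he hu hv hne' (Walk.nil v)
    have hle := dist_le h1
    interval_cases h : G.dist u v
    · exact absurd (eq_of_dist_eq_zero ⟨1, h1⟩ h) hne'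
    · rfl

/-- Parity of a symmetric double sum with zero diagonal. -/
lemma even_double_sum (s : Finset α) (f : α → α → ℕ) (hsymm : ∀ a b, f a b = f b a)
    (hdiag : ∀ a, f a a = 0) : 2 ∣ ∑ a ∈ s, ∑ b ∈ s, f a b := by
  classical
  induction s using Finset.induction with
  | empty => simp
  | insert a s ha ih =>
      rw [Finset.sum_insert ha]
      have : ∀ x ∈ s, ∑ b ∈ insert a s, f x b = f x a + ∑ b ∈ s, f x b := by
        intro x _; rw [Finset.sum_insert ha]
      rw [Finset.sum_congr rfl this, Finset.sum_add_distrib, Finset.sum_insert ha, hdiag]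
      have : ∑ x ∈ s, f x a = ∑ b ∈ s, f a b := by
        apply Finset.sum_congr rfl; intro x _; exact hsymm x a
      rw [this]
      omega

lemma cycle_mk_length (n : ℕ) (v : Fin (n+2) → α) (e : Fin (n+2) → Finset α)
    (he : ∀ i, e i ∈ G.edges) (einj : Function.Injective e) (vinj : Function.Injective v)
    (h1 : ∀ i, v i ∈ e i) (h2 : ∀ i, v (i + 1) ∈ e i) :
    (Cycle.mk n v e he einj vinj h1 h2 : G.Cycle).length = n + 2 := rfl

lemma cycle_mk_edgeFinset (n : ℕ) (v : Fin (n+2) → α) (e : Fin (n+2) → Finset α)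
    (he : ∀ i, e i ∈ G.edges) (einj : Function.Injective e) (vinj : Function.Injective v)
    (h1 : ∀ i, v i ∈ e i) (h2 : ∀ i, v (i + 1) ∈ e i) :
    (Cycle.mk n v e he einj vinj h1 h2 : G.Cycle).edgeFinset = Finset.univ.image e := rfl

lemma Cycle.card_edgeFinset (C : G.Cycle) : C.edgeFinset.card = C.length := by
  unfold Cycle.edgeFinset Cycle.length
  rw [Finset.card_image_of_injective _ C.einj, Finset.card_univ, Fintype.card_fin]

lemma Cycle.mem_edgeFinset {C : G.Cycle} {x : Finset α} :
    x ∈ C.edgeFinset ↔ ∃ i, C.e i = x := by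
  unfold Cycle.edgeFinset
  simp

/-- Two distinct edges share at most one vertex. -/
lemma edge_inter (hcyc : ∀ C : G.Cycle, 3 ≤ C.length) {e f : Finset α}
    (he : e ∈ G.edges) (hf : f ∈ G.edges) (hef : e ≠ f) {u v : α}
    (hue : u ∈ e) (huf : u ∈ f) (hve : v ∈ e) (hvf : v ∈ f) (huv : u ≠ v) : False := by
  have vinj : Function.Injective ![u, v] := by
    intro i j hij
    match i, j with
    | 0, 0 => rfl
    | 1, 1 => rfl
    | 0, 1 => exact absurd (by simpa using hij) huv
    | 1, 0 => exact absurd (show v = u by simpa using hij).symm huv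
  have einj : Function.Injective ![e, f] := by
    intro i j hij
    match i, j with
    | 0, 0 => rfl
    | 1, 1 => rfl
    | 0, 1 => exact absurd (by simpa using hij) hef
    | 1, 0 => exact absurd (show f = e by simpa using hij).symm hef
  have hee : ∀ i : Fin 2, ![e, f] i ∈ G.edges := by
    intro i
    match i with
    | 0 => simpa
    | 1 => simpa
  have h1 : ∀ i : Fin 2, ![u, v] i ∈ ![e, f] i := by
    intro i
    match i with
    | 0 => simpa
    | 1 => simpa
  have h2 : ∀ i : Fin 2, ![u, v] (i + 1) ∈ ![e, f] i := by
    intro i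
    match i with
    | 0 => show ![u, v] 1 ∈ e; simpa
    | 1 => show ![u, v] 0 ∈ f; simpa
  have := hcyc (Cycle.mk 0 ![u, v] ![e, f] hee einj vinj h1 h2)
  rw [cycle_mk_length] at this
  omega

/-- Every vertex lies in some edge. -/
lemma exists_edge_mem (hgood : G.Good) (hconn : G.Connected) {e0 : Finset α}
    (he0 : e0 ∈ G.edges) (hcard : 2 ≤ e0.card) {v : α} (hv : v ∈ G.verts) :
    ∃ e ∈ G.edges, v ∈ e := by
  obtain ⟨u, hu, hne⟩ := Finset.exists_mem_ne (s := e0) (by omega) v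
  obtain ⟨p, hw⟩ := hconn v hv u (hgood e0 he0 hu)
  cases hw with
  | nil => exact absurd rfl hne
  | cons x e hee hu' hx hnex hwalk => exact ⟨e, hee, hu'⟩

lemma fin_add_mk (n : ℕ) (t : ℕ) (ht : t + 1 < n + 2) (ht' : t < n + 2) :
    (⟨t, ht'⟩ : Fin (n+2)) + 1 = ⟨t + 1, ht⟩ := by
  apply Fin.ext
  rw [Fin.val_add, Fin.val_one, Nat.mod_eq_of_lt ht]

set_option maxHeartbeats 1000000 in
/-- Key construction: a "chord" from `x` across an arc of the cycle yields a shorter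
cycle, contradicting uniqueness. -/
lemma arc_cycle (huniq : ∀ C C' : G.Cycle, C.edgeFinset = C'.edgeFinset)
    (hcyc : ∀ C : G.Cycle, 3 ≤ C.length) (C : G.Cycle) {x : α} {i j : Fin (C.n + 2)}
    (hxi : x ∈ C.e i) (hxj : x ∈ C.e j) (hd1 : 1 ≤ (j - i).val) (hd2 : (j - i).val ≤ C.n)
    (hxv : ∀ t : ℕ, 1 ≤ t → t ≤ (j - i).val → ∀ (h : t < C.n + 2), x ≠ C.v (i + ⟨t, h⟩)) :
    False := by
  obtain ⟨d, hdd⟩ : ∃ d, d = (j - i).val := ⟨_, rfl⟩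
  rw [← hdd] at hd1 hd2 hxv
  have hij : i + (j - i) = j := by abel
  have hdc : d < C.n + 2 := by have := (j - i).isLt; omega
  -- the new cycle data over `Fin (d - 1 + 2)`
  have hlen : d - 1 + 2 = d + 1 := by omega
  let v' : Fin (d - 1 + 2) → α := fun t =>
    if t.val = 0 then x else C.v (i + ⟨t.val, by omega⟩)
  let e' : Fin (d - 1 + 2) → Finset α := fun t => C.e (i + ⟨t.val, by omega⟩)
  have hmkinj : ∀ a b : Fin (d - 1 + 2),
      (i + (⟨a.val, by omega⟩ : Fin (C.n+2))) = (i + ⟨b.val, by omega⟩) → a = b := by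
    intro a b hab
    have h2 := add_left_cancel hab
    exact Fin.ext (Fin.mk_eq_mk.mp h2)
  have he' : ∀ t, e' t ∈ G.edges := fun t => C.he _
  have einj : Function.Injective e' := by
    intro a b hab
    exact hmkinj a b (C.einj hab)
  have vinj : Function.Injective v' := by
    intro a b hab
    unfold v' at hab
    beta_reduce at hab
    by_cases ha : a.val = 0 <;> by_cases hb : b.val = 0
    · exact Fin.ext (by omega)
    · rw [if_pos ha, if_neg hb] at hab
      exact absurd hab (hxv b.val (by omega) (by omega) (by omega))
    · rw [if_neg ha, if_pos hb] at hab
      exact absurd hab.symm (hxv a.val (by omega) (by omega) (by omega))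
    · rw [if_neg ha, if_neg hb] at hab
      exact hmkinj a b (C.vinj hab)
  have h1 : ∀ t, v' t ∈ e' t := by
    intro t
    unfold v' e'
    beta_reduce
    by_cases ht : t.val = 0
    · rw [if_pos ht]
      have : (⟨t.val, by omega⟩ : Fin (C.n+2)) = 0 := by
        apply Fin.ext; simpa using ht
      rw [this, add_zero]
      exact hxi
    · rw [if_neg ht]
      exact C.mem_fst _
  have h2 : ∀ t, v' (t + 1) ∈ e' t := by
    intro t
    unfold v' e'
    beta_reduce
    by_cases ht : t.val = d - 1 + 1
    · -- wrap-around step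
      have htop : (t + 1).val = 0 := by
        rw [Fin.val_add, Fin.val_one, ht]
        have : d - 1 + 1 + 1 = d - 1 + 2 := rfl
        rw [this, Nat.mod_self]
      rw [if_pos htop]
      have harg : (⟨t.val, by omega⟩ : Fin (C.n+2)) = j - i := by
        apply Fin.ext
        show t.val = (j - i).val
        omega
      rw [harg, hij]
      exact hxj
    · have htv : (t + 1).val = t.val + 1 := by
        rw [Fin.val_add, Fin.val_one, Nat.mod_eq_of_lt (by omega)]
      rw [if_neg (by omega)]
      have harg : (⟨(t+1).val, by omega⟩ : Fin (C.n+2)) = ⟨t.val, by omega⟩ + 1 := by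
        rw [fin_add_mk C.n t.val (by omega)]
        exact Fin.ext htv
      rw [harg, ← add_assoc]
      exact C.mem_snd _
  set C' : G.Cycle := Cycle.mk (d - 1) v' e' he' einj vinj h1 h2 with hC'
  have hlen' : C'.length = d + 1 := by
    unfold Cycle.length
    show d - 1 + 2 = d + 1
    omega
  have h3 : 3 ≤ d + 1 := hlen' ▸ hcyc C'
  have hcard : C'.edgeFinset.card = C.edgeFinset.card := by rw [huniq C' C]
  rw [Cycle.card_edgeFinset, Cycle.card_edgeFinset, hlen'] at hcard
  unfold Cycle.length at hcard
  omega

set_option maxHeartbeats 1000000 in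
lemma chord_v (huniq : ∀ C C' : G.Cycle, C.edgeFinset = C'.edgeFinset)
    (hcyc : ∀ C : G.Cycle, 3 ≤ C.length) (C : G.Cycle) {l i : Fin (C.n + 2)}
    (h : C.v l ∈ C.e i) : l = i ∨ l = i + 1 := by
  by_contra hcon
  push_neg at hcon
  obtain ⟨hli, hli1⟩ := hcon
  obtain ⟨D, hD⟩ : ∃ D, D = (l - i).val := ⟨_, rfl⟩
  have hD0 : D ≠ 0 := by
    intro h0
    apply hli
    apply sub_eq_zero.mp
    apply Fin.ext
    rw [Fin.val_zero]
    omega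
  have hD1 : D ≠ 1 := by
    intro h1
    apply hli1
    have : l - i = 1 := by
      apply Fin.ext
      rw [Fin.val_one]
      omega
    exact (sub_eq_iff_eq_add.mp this).trans (add_comm 1 i)
  have hDc : D < C.n + 2 := hD ▸ (l - i).isLt
  -- j := l - 1
  have hsub : ((l - 1) - i).val = D - 1 := by
    have h2 : ((l - 1) - i) + 1 = l - i := by abel
    have hE := ((l - 1) - i).isLt
    have h3 : (((l - 1) - i) + 1).val = ((l - 1) - i).val + 1 ∨
        (((l - 1) - i) + 1).val = 0 := by
      rw [Fin.val_add, Fin.val_one]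
      rcases Nat.lt_or_ge (((l - 1) - i).val + 1) (C.n + 2) with hlt | hge
      · left; exact Nat.mod_eq_of_lt hlt
      · right
        have h4 : ((l - 1) - i).val + 1 = C.n + 2 := by omega
        rw [h4, Nat.mod_self]
    rw [h2] at h3
    rcases h3 with h3 | h3 <;> omega
  have hxj : C.v l ∈ C.e (l - 1) := by
    have := C.mem_snd (l - 1)
    rwa [sub_add_cancel] at this
  apply arc_cycle huniq hcyc C h hxj (by omega) (by omega)
  intro t ht1 ht2 hlt heq
  have : l = i + ⟨t, hlt⟩ := C.vinj heq
  have hvt : (l - i).val = t := by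
    have h5 : l - i = ⟨t, hlt⟩ := by rw [this]; abel
    rw [h5]
  omega

lemma cycle_sep (huniq : ∀ C C' : G.Cycle, C.edgeFinset = C'.edgeFinset)
    (hcyc : ∀ C : G.Cycle, 3 ≤ C.length) (C : G.Cycle) {i j : Fin (C.n + 2)}
    (hij : i ≠ j) {x : α} (hxi : x ∈ C.e i) (hxj : x ∈ C.e j)
    (hxvi : x ≠ C.v i) (hxvj : x ≠ C.v j) : False := by
  by_cases hxl : ∃ l, x = C.v l
  · obtain ⟨l, rfl⟩ := hxl
    rcases chord_v huniq hcyc C hxi with h1 | h1 <;>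
      rcases chord_v huniq hcyc C hxj with h2 | h2
    · exact hxvi (by rw [h1])
    · exact hxvi (by rw [h1])
    · exact hxvj (by rw [h2])
    · exact hij (add_right_cancel (h1 ▸ h2 ▸ rfl : i + 1 = j + 1))
  · push_neg at hxl
    have hd0 : (j - i).val ≠ 0 := by
      intro h0
      exact hij (sub_eq_zero.mp (Fin.ext (by rw [Fin.val_zero]; exact h0))).symm
    by_cases hd : (j - i).val ≤ C.n
    · exact arc_cycle huniq hcyc C hxi hxj (by omega) hd
        (fun t _ _ h => hxl _)
    · -- (j - i).val = C.n + 1, so (i - j).val = 1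
      have hjiv : j - i = ⟨C.n + 1, by omega⟩ := by
        apply Fin.ext
        show (j - i).val = C.n + 1
        have := (j - i).isLt
        omega
      have hone : (⟨C.n + 1, by omega⟩ : Fin (C.n+2)) + 1 = 0 := by
        apply Fin.ext
        rw [Fin.val_add, Fin.val_one]
        simp
      have hij1 : i - j = 1 := by
        have : i - j = -(j - i) := by abel
        rw [this, hjiv]
        exact neg_eq_of_add_eq_zero_right hone
      have hcl : 3 ≤ C.n + 2 := hcyc C
      exact arc_cycle huniq hcyc C hxj hxi (by rw [hij1, Fin.val_one])
        (by rw [hij1, Fin.val_one]; omega) (fun t _ _ h => hxl _)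

/-- If all edges lie on the cycle, the vertex count is `m * (k-1)`. -/
lemma count_loose (k : ℕ) (hk : 3 ≤ k) (hgood : G.Good) (hunif : G.Uniform k)
    (hconn : G.Connected) (huniq : ∀ C C' : G.Cycle, C.edgeFinset = C'.edgeFinset)
    (hcyc : ∀ C : G.Cycle, 3 ≤ C.length) (C : G.Cycle)
    (hEF : G.edges = C.edgeFinset) : G.verts.card = G.edges.card * (k - 1) := by
  have hcover : G.verts = Finset.univ.biUnion
      (fun i : Fin (C.n+2) => (C.e i).erase (C.v i)) := by
    ext x
    simp only [Finset.mem_biUnion, Finset.mem_univ, true_and, Finset.mem_erase]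
    constructor
    · intro hx
      obtain ⟨e, he, hxe⟩ := exists_edge_mem hgood hconn (C.he 0)
        (by rw [hunif _ (C.he 0)]; omega) hx
      rw [hEF, Cycle.mem_edgeFinset] at he
      obtain ⟨i, rfl⟩ := he
      by_cases hxl : ∃ l, x = C.v l
      · obtain ⟨l, rfl⟩ := hxl
        refine ⟨l - 1, ?_, ?_⟩
        · intro heq
          have hl : l = l - 1 := C.vinj heq
          have h1 : l + 1 = l + 0 := by
            rw [add_zero]
            conv_lhs => rw [hl]
            rw [sub_add_cancel]
          have h0 : (1 : Fin (C.n+2)) = 0 := add_left_cancel h1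
          exact absurd (congrArg Fin.val h0) (by simp)
        · have := C.mem_snd (l - 1)
          rwa [sub_add_cancel] at this
      · push_neg at hxl
        exact ⟨i, hxl i, hxe⟩
    · rintro ⟨i, _, hx⟩
      exact hgood _ (C.he i) hx
  have hdisj : ∀ i ∈ (Finset.univ : Finset (Fin (C.n+2))), ∀ j ∈ Finset.univ, i ≠ j →
      Disjoint ((C.e i).erase (C.v i)) ((C.e j).erase (C.v j)) := by
    intro i _ j _ hij
    rw [Finset.disjoint_left]
    intro x hxi hxj
    rw [Finset.mem_erase] at hxi hxj
    exact cycle_sep huniq hcyc C hij hxi.2 hxj.2 hxi.1 hxj.1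
  rw [hcover, Finset.card_biUnion hdisj]
  have hcard : ∀ i : Fin (C.n+2), ((C.e i).erase (C.v i)).card = k - 1 := by
    intro i
    rw [Finset.card_erase_of_mem (C.mem_fst i), hunif _ (C.he i)]
  rw [Finset.sum_congr rfl (fun i _ => hcard i), Finset.sum_const, Finset.card_univ,
    Fintype.card_fin, smul_eq_mul]
  congr 1
  rw [hEF, Cycle.card_edgeFinset]
  rfl

/-- Walks between vertices outside `e.erase a` can avoid the edge `e`, provided all
vertices of `e` other than `a` lie only in `e`. -/
lemma walk_surgery {e : Finset α} (he : e ∈ G.edges) {a : α}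
    (hP : ∀ z ∈ e, z ≠ a → ∀ f ∈ G.edges, z ∈ f → f = e) :
    ∀ p, ∀ u v : α, G.Walk u v p → (u ∈ e → u = a) → (v ∈ e → v = a) →
      ∃ q, FinHypergraph.Walk ⟨G.verts, G.edges.erase e⟩ u v q := by
  intro p
  induction p using Nat.strong_induction_on with
  | _ p ih =>
    intro u v hw hu hv
    cases hw with
    | nil => exact ⟨0, Walk.nil _⟩
    | cons w f hf huf hwf hneq hrest =>
      rename_i p'
      by_cases hwP : w ∈ e ∧ w ≠ a
      · have hfe : f = e := hP w hwP.1 hwP.2 f hf hwf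
        cases hrest with
        | nil => exact absurd (hv hwP.1) hwP.2
        | cons w2 f2 hf2 hwf2 hw2f2 hneq2 hrest2 =>
          rename_i p''
          have hf2e : f2 = e := hP w hwP.1 hwP.2 f2 hf2 hwf2
          have hw2e : w2 ∈ e := hf2e ▸ hw2f2
          by_cases huw2 : u = w2
          · subst huw2
            exact ih p'' (by omega) u v hrest2 hu hv
          · have hue : u ∈ e := hfe ▸ huf
            have hw' : G.Walk u v (p'' + 1) :=
              Walk.cons w2 e he hue hw2e huw2 hrest2
            exact ih (p'' + 1) (by omega) u v hw' hu hv
      · have hwP' : w ∈ e → w = a := by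
          intro hwe
          by_contra hcon
          exact hwP ⟨hwe, hcon⟩
        by_cases hfe : f = e
        · exact absurd ((hu (hfe ▸ huf)).trans (hwP' (hfe ▸ hwf)).symm) hneq
        · obtain ⟨q, hq⟩ := ih p' (by omega) w v hrest hwP' hv
          exact ⟨q + 1, Walk.cons w f (Finset.mem_erase.mpr ⟨hfe, hf⟩) huf hwf hneq hq⟩

lemma walk_congr {G₁ G₂ : FinHypergraph α} (hGH : G₁.edges = G₂.edges) {u v : α} {p : ℕ}
    (hw : G₁.Walk u v p) : G₂.Walk u v p := by
  induction hw with
  | nil x => exact Walk.nil x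
  | cons w f hf huf hwf hneq hrest ihw => exact Walk.cons w f (hGH ▸ hf) huf hwf hneq ihw

/-- From a vertex of an "isolated" edge one cannot walk out of the edge. -/
lemma walk_stuck {e : Finset α} (hdeg : ∀ z ∈ e, ∀ f ∈ G.edges, z ∈ f → f = e)
    {x : α} (hx : x ∉ e) : ∀ p, ∀ y, y ∈ e → G.Walk y x p → False := by
  intro p
  induction p using Nat.strong_induction_on with
  | _ p ih =>
    intro y hy hw
    cases hw with
    | nil => exact hx hy
    | cons w f hf hyf hwf hneq hrest =>
      rename_i p'
      have hfe : f = e := hdeg y hy f hf hyf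
      exact ih p' (by omega) w (hfe ▸ hwf) hrest

lemma deg_one_unique {z : α} (hdeg : G.degree z ≤ 1) {e : Finset α} (he : e ∈ G.edges)
    (hz : z ∈ e) {f : Finset α} (hf : f ∈ G.edges) (hzf : z ∈ f) : f = e := by
  by_contra hfe
  have hsub : {f, e} ⊆ G.edges.filter (fun g => z ∈ g) := by
    intro g hg
    rw [Finset.mem_insert, Finset.mem_singleton] at hg
    rcases hg with rfl | rfl <;> rw [Finset.mem_filter] <;> exact ⟨by assumption, by assumption⟩
  have h2 : 2 ≤ G.degree z := by
    have := Finset.card_le_card hsub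
    rwa [Finset.card_insert_of_notMem (by simpa using hfe), Finset.card_singleton] at this
  omega

lemma cycle_vertex_deg (C : G.Cycle) (i : Fin (C.n + 2)) : 2 ≤ G.degree (C.v i) := by
  have h1 : C.v i ∈ C.e i := C.mem_fst i
  have h2 : C.v i ∈ C.e (i - 1) := by
    have := C.mem_snd (i - 1)
    rwa [sub_add_cancel] at this
  have hne : C.e (i - 1) ≠ C.e i := by
    intro hcon
    have : i - 1 = i := C.einj hcon
    have h3 : i - 1 + 1 = i + 1 := by rw [this]
    rw [sub_add_cancel] at h3
    have h4 : (1 : Fin (C.n + 2)) = 0 := by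
      have := add_left_cancel (a := i) (b := (1 : Fin (C.n+2))) (c := 0)
        (by rw [add_zero]; exact h3.symm)
      exact this
    exact absurd (congrArg Fin.val h4) (by simp)
  have hsub : {C.e (i - 1), C.e i} ⊆ G.edges.filter (fun g => C.v i ∈ g) := by
    intro g hg
    rw [Finset.mem_insert, Finset.mem_singleton] at hg
    rcases hg with rfl | rfl <;> rw [Finset.mem_filter]
    · exact ⟨C.he _, h2⟩
    · exact ⟨C.he _, h1⟩
  have := Finset.card_le_card hsub
  rwa [Finset.card_insert_of_notMem (by simpa using hne), Finset.card_singleton] at this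

/-- A loose path in `G`: edges `g 0, …, g r`, consecutive ones glued at the
joints `b 0, …, b (r-1)`. (Values beyond the bounds are junk.) -/
structure LPath (G : FinHypergraph α) where
  r : ℕ
  g : ℕ → Finset α
  b : ℕ → α
  hg : ∀ i ≤ r, g i ∈ G.edges
  ginj : ∀ i ≤ r, ∀ j ≤ r, g i = g j → i = j
  binj : ∀ i < r, ∀ j < r, b i = b j → i = j
  hb1 : ∀ i < r, b i ∈ g i
  hb2 : ∀ i < r, b i ∈ g (i + 1)

lemma LPath.card_bound (P : LPath G) : P.r + 1 ≤ G.edges.card := by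
  have := Finset.card_le_card_of_injOn P.g
    (fun a ha => P.hg a (by simpa using Nat.lt_succ_iff.mp (Finset.mem_range.mp ha)))
    (fun a ha b hb hab => P.ginj a (Nat.lt_succ_iff.mp (Finset.mem_range.mp ha))
      b (Nat.lt_succ_iff.mp (Finset.mem_range.mp hb)) hab)
  simpa using this

/-- Reverse of a loose path. -/
def LPath.rev (P : LPath G) : LPath G where
  r := P.r
  g := fun i => P.g (P.r - i)
  b := fun i => P.b (P.r - 1 - i)
  hg := fun i hi => P.hg _ (by omega)
  ginj := fun i hi j hj hij => by
    have := P.ginj _ (by omega : P.r - i ≤ P.r) _ (by omega : P.r - j ≤ P.r) hij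
    omega
  binj := fun i hi j hj hij => by
    have := P.binj _ (by omega : P.r - 1 - i < P.r) _ (by omega : P.r - 1 - j < P.r) hij
    omega
  hb1 := fun i hi => by
    have := P.hb2 (P.r - 1 - i) (by omega)
    have harg : P.r - 1 - i + 1 = P.r - i := by omega
    rwa [harg] at this
  hb2 := fun i hi => by
    show P.b (P.r - 1 - i) ∈ P.g (P.r - (i + 1))
    have harg : P.r - (i + 1) = P.r - 1 - i := by omega
    rw [harg]
    exact P.hb1 (P.r - 1 - i) (by omega)

/-- Build a cycle out of a cyclic vertex/edge sequence indexed by `ℕ` below `ℓ`. -/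
lemma seq_cycle (ℓ : ℕ) (hl : 2 ≤ ℓ) (w : ℕ → α) (h : ℕ → Finset α)
    (hh : ∀ t < ℓ, h t ∈ G.edges)
    (hinj : ∀ t < ℓ, ∀ s < ℓ, h t = h s → t = s)
    (winj : ∀ t < ℓ, ∀ s < ℓ, w t = w s → t = s)
    (m1 : ∀ t < ℓ, w t ∈ h t) (m2 : ∀ t, t + 1 < ℓ → w (t + 1) ∈ h t)
    (m2' : w 0 ∈ h (ℓ - 1)) :
    ∃ CY : G.Cycle, CY.edgeFinset = (Finset.range ℓ).image h ∧ CY.length = ℓ := by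
  have hvlt : ∀ i : Fin (ℓ - 2 + 2), i.val < ℓ := fun i => by have := i.isLt; omega
  refine ⟨⟨ℓ - 2, fun i => w i.val, fun i => h i.val, fun i => hh _ (hvlt i),
    fun i j hij => Fin.ext (hinj _ (hvlt i) _ (hvlt j) hij),
    fun i j hij => Fin.ext (winj _ (hvlt i) _ (hvlt j) hij),
    fun i => m1 _ (hvlt i), ?_⟩, ?_, ?_⟩
  · intro i
    show w (i + 1).val ∈ h i.val
    by_cases hiv : i.val = ℓ - 2 + 1
    · have htop : (i + 1).val = 0 := by
        rw [Fin.val_add, Fin.val_one, hiv]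
        have : ℓ - 2 + 1 + 1 = ℓ - 2 + 2 := rfl
        rw [this, Nat.mod_self]
      rw [htop]
      have : ℓ - 1 = i.val := by omega
      rwa [this] at m2'
    · have htv : (i + 1).val = i.val + 1 := by
        rw [Fin.val_add, Fin.val_one, Nat.mod_eq_of_lt (by have := i.isLt; omega)]
      rw [htv]
      exact m2 _ (by have := i.isLt; omega)
  · show Finset.univ.image (fun i : Fin (ℓ - 2 + 2) => h i.val) = (Finset.range ℓ).image h
    ext y
    simp only [Finset.mem_image, Finset.mem_univ, true_and, Finset.mem_range]
    constructor
    · rintro ⟨i, rfl⟩; exact ⟨i.val, hvlt i, rfl⟩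
    · rintro ⟨t, ht, rfl⟩; exact ⟨⟨t, by omega⟩, rfl⟩
  · show ℓ - 2 + 2 = ℓ
    omega

/-- One step of the longest-path argument: either the path extends, or we obtain a
cycle formed by a suffix run of its edges. -/
lemma path_step (hbr : ∀ e ∈ G.edges, 2 ≤ (e.filter (fun v => 2 ≤ G.degree v)).card)
    (P : LPath G) :
    (∃ P' : LPath G, P'.r = P.r + 1 ∧ ∀ i ≤ P.r, P'.g i = P.g i) ∨
    (∃ s ℓ : ℕ, s + ℓ = P.r + 1 ∧ 2 ≤ ℓ ∧ ∃ CY : G.Cycle,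
      CY.edgeFinset = (Finset.range ℓ).image (fun t => P.g (s + t)) ∧ CY.length = ℓ) := by
  set r := P.r with hr
  have hgr : P.g r ∈ G.edges := P.hg r le_rfl
  -- pick a branch vertex x of the last edge, different from the last joint
  obtain ⟨x, hx⟩ : ∃ x, x ∈ P.g r ∧ 2 ≤ G.degree x ∧ (1 ≤ r → x ≠ P.b (r - 1)) := by
    have h2 := hbr _ hgr
    obtain ⟨x1, hx1, x2, hx2, hx12⟩ := Finset.one_lt_card.mp h2
    rw [Finset.mem_filter] at hx1 hx2
    by_cases hc : x1 = P.b (r - 1)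
    · exact ⟨x2, hx2.1, hx2.2, fun _ => by rw [← hc]; exact (Ne.symm hx12)⟩
    · exact ⟨x1, hx1.1, hx1.2, fun _ => hc⟩
  obtain ⟨hxg, hxdeg, hxb⟩ := hx
  -- pick a second edge f through x
  obtain ⟨f, hf, hxf, hfne⟩ : ∃ f, f ∈ G.edges ∧ x ∈ f ∧ f ≠ P.g r := by
    have h2 : 2 ≤ (G.edges.filter (fun g => x ∈ g)).card := hxdeg
    obtain ⟨f1, hf1, f2, hf2, hf12⟩ := Finset.one_lt_card.mp h2
    rw [Finset.mem_filter] at hf1 hf2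
    by_cases hc : f1 = P.g r
    · exact ⟨f2, hf2.1, hf2.2, by rw [← hc]; exact (Ne.symm hf12)⟩
    · exact ⟨f1, hf1.1, hf1.2, hc⟩
  by_cases hxold : ∃ j < r, P.b j = x
  · -- variant 1 : x is an old joint, short-circuit
    obtain ⟨j, hj, hbj⟩ := hxold
    have hjr : j + 2 ≤ r := by
      rcases Nat.lt_or_ge (j + 2) (r + 1) with h | h
      · omega
      · exfalso
        have hj1 : j = r - 1 := by omega
        exact (hxb (by omega)) (hj1 ▸ hbj.symm)
    right
    refine ⟨j + 1, r - j, by omega, by omega, ?_⟩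
    have := seq_cycle (G := G) (r - j) (by omega) (fun t => P.b (j + t))
      (fun t => P.g (j + 1 + t))
      (fun t ht => P.hg _ (by omega))
      (fun t ht s hs hts => by have := P.ginj (j+1+t) (by omega) (j+1+s) (by omega) hts; omega)
      (fun t ht s hs hts => by have := P.binj (j+t) (by omega) (j+s) (by omega) hts; omega)
      (fun t ht => by
        show P.b (j + t) ∈ P.g (j + 1 + t)
        have := P.hb2 (j + t) (by omega)
        rwa [show j + t + 1 = j + 1 + t by omega] at this)
      (fun t ht => by
        show P.b (j + (t + 1)) ∈ P.g (j + 1 + t)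
        rw [show j + (t + 1) = j + t + 1 by omega, show j + 1 + t = j + t + 1 by omega]
        exact P.hb1 (j + t + 1) (by omega))
      (by
        show P.b (j + 0) ∈ P.g (j + 1 + (r - j - 1))
        rw [show j + 0 = j by omega, hbj, show j + 1 + (r - j - 1) = r by omega]
        exact hxg)
    obtain ⟨CY, hCY1, hCY2⟩ := this
    exact ⟨CY, hCY1, hCY2⟩
  · push_neg at hxold
    by_cases hfold : ∃ j ≤ r, P.g j = f
    · -- variant 2 : f is an old edge, close the cycle through x
      obtain ⟨j, hj, hgj⟩ := hfold
      have hjr : j < r := by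
        rcases Nat.lt_or_ge j r with h | h
        · exact h
        · exact absurd (by rw [← hgj]; congr 1; omega) hfne
      right
      refine ⟨j, r - j + 1, by omega, by omega, ?_⟩
      have := seq_cycle (G := G) (r - j + 1) (by omega)
        (fun t => if t = 0 then x else P.b (j + t - 1))
        (fun t => P.g (j + t))
        (fun t ht => P.hg _ (by omega))
        (fun t ht s hs hts => by have := P.ginj (j+t) (by omega) (j+s) (by omega) hts; omega)
        ?_ ?_ ?_ ?_
      · obtain ⟨CY, hCY1, hCY2⟩ := this
        exact ⟨CY, by rw [hCY1], hCY2⟩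
      · -- winj
        intro t ht s hs hts
        beta_reduce at hts
        by_cases ht0 : t = 0 <;> by_cases hs0 : s = 0
        · omega
        · rw [if_pos ht0, if_neg hs0] at hts
          exact absurd hts.symm (hxold (j + s - 1) (by omega))
        · rw [if_neg ht0, if_pos hs0] at hts
          exact absurd hts (hxold (j + t - 1) (by omega))
        · rw [if_neg ht0, if_neg hs0] at hts
          have := P.binj (j + t - 1) (by omega) (j + s - 1) (by omega) hts
          omega
      · -- m1
        intro t ht
        show (if t = 0 then x else P.b (j + t - 1)) ∈ P.g (j + t)
        by_cases ht0 : t = 0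
        · rw [if_pos ht0, ht0, show j + 0 = j by omega, hgj]
          exact hxf
        · rw [if_neg ht0]
          have := P.hb2 (j + t - 1) (by omega)
          rwa [show j + t - 1 + 1 = j + t by omega] at this
      · -- m2
        intro t ht
        show (if t + 1 = 0 then x else P.b (j + (t + 1) - 1)) ∈ P.g (j + t)
        rw [if_neg (by omega : ¬ t + 1 = 0)]
        have := P.hb1 (j + t) (by omega)
        rwa [show j + (t + 1) - 1 = j + t by omega]
      · -- m2'
        show (if (0:ℕ) = 0 then x else P.b (j + 0 - 1)) ∈ P.g (j + (r - j + 1 - 1))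
        rw [if_pos rfl, show j + (r - j + 1 - 1) = r by omega]
        exact hxg
    · -- variant 3 : extension
      push_neg at hfold
      left
      refine ⟨⟨r + 1, fun i => if i = r + 1 then f else P.g i,
        fun i => if i = r then x else P.b i, ?_, ?_, ?_, ?_, ?_⟩, rfl, ?_⟩
      · intro i hi
        show (if i = r + 1 then f else P.g i) ∈ G.edges
        by_cases hc : i = r + 1
        · rw [if_pos hc]; exact hf
        · rw [if_neg hc]; exact P.hg i (by omega)
      · intro i hi j hj hij
        beta_reduce at hij
        by_cases hc : i = r + 1 <;> by_cases hc' : j = r + 1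
        · omega
        · rw [if_pos hc, if_neg hc'] at hij
          exact absurd hij.symm (hfold j (by omega))
        · rw [if_neg hc, if_pos hc'] at hij
          exact absurd hij (hfold i (by omega))
        · rw [if_neg hc, if_neg hc'] at hij
          exact P.ginj i (by omega) j (by omega) hij
      · intro i hi j hj hij
        beta_reduce at hij
        by_cases hc : i = r <;> by_cases hc' : j = r
        · omega
        · rw [if_pos hc, if_neg hc'] at hij
          exact absurd hij.symm (hxold j (by omega))
        · rw [if_neg hc, if_pos hc'] at hij
          exact absurd hij (hxold i (by omega))
        · rw [if_neg hc, if_neg hc'] at hij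
          exact P.binj i (by omega) j (by omega) hij
      · intro i hi
        show (if i = r then x else P.b i) ∈ (if i = r + 1 then f else P.g i)
        by_cases hc : i = r
        · rw [if_pos hc, if_neg (by omega : ¬ i = r + 1), hc]
          exact hxg
        · rw [if_neg hc, if_neg (by omega : ¬ i = r + 1)]
          exact P.hb1 i (by omega)
      · intro i hi
        show (if i = r then x else P.b i) ∈ (if i + 1 = r + 1 then f else P.g (i + 1))
        by_cases hc : i = r
        · rw [if_pos hc, if_pos (by omega : i + 1 = r + 1)]
          exact hxf
        · rw [if_neg hc, if_neg (by omega : ¬ i + 1 = r + 1)]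
          exact P.hb2 i (by omega)
      · intro i hi
        show (if i = r + 1 then f else P.g i) = P.g i
        exact if_neg (by omega)

/-- Case B of the induction: if every edge has at least two branch vertices, then every
edge lies on the cycle. -/
lemma caseB_edges_eq (k : ℕ) (hk : 3 ≤ k) (hgood : G.Good) (hunif : G.Uniform k)
    (hconn : G.Connected) (huniq : ∀ C C' : G.Cycle, C.edgeFinset = C'.edgeFinset)
    (hcyc : ∀ C : G.Cycle, 3 ≤ C.length) (C : G.Cycle)
    (hbr : ∀ e ∈ G.edges, 2 ≤ (e.filter (fun v => 2 ≤ G.degree v)).card) :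
    G.edges = C.edgeFinset := by
  classical
  by_contra hcon
  -- there is an edge off the cycle
  obtain ⟨g0, hg0E, hg0F⟩ : ∃ g0 ∈ G.edges, g0 ∉ C.edgeFinset := by
    by_contra hc
    push_neg at hc
    apply hcon
    apply Finset.Subset.antisymm hc
    intro y hy
    rw [Cycle.mem_edgeFinset] at hy
    obtain ⟨i, rfl⟩ := hy
    exact C.he i
  obtain ⟨x0, hx0⟩ : g0.Nonempty := by
    rw [← Finset.card_pos, hunif _ hg0E]; omega
  set Q : ℕ → Prop := fun t => ∃ P : LPath G, P.r = t ∧ ∃ i ≤ P.r, P.g i ∉ C.edgeFinset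
    with hQ
  have hQ0 : Q 0 := by
    refine ⟨⟨0, fun _ => g0, fun _ => x0, ?_, ?_, ?_, ?_, ?_⟩, rfl, 0, le_rfl, hg0F⟩
    · intro i hi; exact hg0E
    · intro i hi j hj _; omega
    · intro i hi; omega
    · intro i hi; omega
    · intro i hi; omega
  have hQbound : ∀ t, Q t → t + 1 ≤ G.edges.card := by
    rintro t ⟨P, rfl, -⟩
    exact P.card_bound
  set R := Nat.findGreatest Q G.edges.card with hR
  have hQR : Q R := Nat.findGreatest_spec (Nat.zero_le _) hQ0
  have hnot : ¬ Q (R + 1) := by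
    intro hq
    have hb := hQbound _ hq
    have h1 : Nat.findGreatest Q G.edges.card < R + 1 := by omega
    exact Nat.findGreatest_is_greatest h1 (by omega) hq
  obtain ⟨P, hPr, p0, hp0r, hp0⟩ := hQR
  -- both ends of the maximal path yield cycles
  have hana : ∀ P' : LPath G, P'.r = R → (∃ i ≤ P'.r, P'.g i ∉ C.edgeFinset) →
      ∃ s ℓ : ℕ, s + ℓ = R + 1 ∧ 2 ≤ ℓ ∧ ∃ CY : G.Cycle,
        CY.edgeFinset = (Finset.range ℓ).image (fun t => P'.g (s + t)) ∧ CY.length = ℓ := by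
    intro P' hP'r hP'T
    rcases path_step hbr P' with ⟨P'', hP''r, hpres⟩ | hcyc' 
    · exfalso
      apply hnot
      refine ⟨P'', by omega, ?_⟩
      obtain ⟨i, hi, hiT⟩ := hP'T
      exact ⟨i, by omega, by rw [hpres i hi]; exact hiT⟩
    · rwa [hP'r] at hcyc'
  set c := C.n + 2 with hc
  have hFcard : C.edgeFinset.card = c := Cycle.card_edgeFinset C
  -- facts from a produced cycle
  have hfacts : ∀ P' : LPath G, P'.r = R → (∃ i ≤ P'.r, P'.g i ∉ C.edgeFinset) →
      (∀ t < c, P'.g (R + 1 - c + t) ∈ C.edgeFinset) ∧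
      (∀ y ∈ C.edgeFinset, ∃ t < c, P'.g (R + 1 - c + t) = y) ∧ c ≤ R + 1 := by
    intro P' hP'r hP'T
    obtain ⟨s, ℓ, hsl, hl2, CY, hCYe, hCYl⟩ := hana P' hP'r hP'T
    have hCYF : CY.edgeFinset = C.edgeFinset := huniq CY C
    have hlc : ℓ = c := by
      have h1 : CY.edgeFinset.card = c := by rw [hCYF, hFcard]
      have h2 : CY.edgeFinset.card = ℓ := by
        rw [hCYe]
        rw [Finset.card_image_of_injOn, Finset.card_range]
        intro a ha b hb hab
        simp only [Finset.mem_coe, Finset.mem_range] at ha hb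
        have := P'.ginj (s + a) (by omega) (s + b) (by omega) hab
        omega
      omega
    subst hlc
    have hs : s = R + 1 - c := by omega
    subst hs
    refine ⟨?_, ?_, by omega⟩
    · intro t ht
      rw [← hCYF, hCYe]
      exact Finset.mem_image.mpr ⟨t, Finset.mem_range.mpr ht, rfl⟩
    · intro y hy
      rw [← hCYF, hCYe] at hy
      obtain ⟨t, ht, hty⟩ := Finset.mem_image.mp hy
      exact ⟨t, Finset.mem_range.mp ht, hty⟩
  -- apply to P and its reverse
  have h1 := hfacts P hPr ⟨p0, hp0r, hp0⟩
  have h2 := hfacts P.rev hPr ⟨P.r - p0, Nat.sub_le P.r p0, ?_⟩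
  · obtain ⟨hmem1, hcov1, hcR⟩ := h1
    obtain ⟨hmem2, hcov2, -⟩ := h2
    -- from the reverse path : g t' ∈ F for all t' ≤ c - 1
    have hlow : ∀ t' < c, P.g t' ∈ C.edgeFinset := by
      intro t' ht'
      have := hmem2 (c - 1 - t') (by omega)
      show P.g t' ∈ C.edgeFinset
      have harg : P.rev.g (R + 1 - c + (c - 1 - t')) = P.g t' := by
        show P.g (P.r - (R + 1 - c + (c - 1 - t'))) = P.g t'
        congr 1
        omega
      rwa [harg] at this
    -- p0 is below the upper run and above the lower run
    have hp0c : c ≤ p0 := by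
      by_contra hcp
      exact hp0 (hlow p0 (by omega))
    have hp0c' : p0 < R + 1 - c := by
      by_contra hcp
      push_neg at hcp
      have := hmem1 (p0 - (R + 1 - c)) (by omega)
      rw [show R + 1 - c + (p0 - (R + 1 - c)) = p0 by omega] at this
      exact hp0 this
    -- but g 0 lies in F, hence in the upper run : contradiction
    have hg0 : P.g 0 ∈ C.edgeFinset := hlow 0 (by omega)
    obtain ⟨t, htc, ht0⟩ := hcov1 _ hg0
    have := P.ginj (R + 1 - c + t) (by omega) 0 (by omega) ht0
    omega
  · show P.rev.g (P.r - p0) ∉ C.edgeFinset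
    have harg : P.rev.g (P.r - p0) = P.g p0 := by
      show P.g (P.r - (P.r - p0)) = P.g p0
      congr 1
      omega
    rwa [harg]

/-- The vertex count of a unicyclic `k`-uniform hypergraph. -/
lemma card_verts_eq (k : ℕ) (hk : 3 ≤ k) : ∀ m : ℕ, ∀ G : FinHypergraph α, G.Good →
    G.Uniform k → G.Connected → (∀ C C' : G.Cycle, C.edgeFinset = C'.edgeFinset) →
    (∀ C : G.Cycle, 3 ≤ C.length) → Nonempty G.Cycle → G.edges.card = m →
    G.verts.card = m * (k - 1) := by
  intro m
  induction m using Nat.strong_induction_on with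
  | _ m ih =>
    intro G hgood hunif hconn huniq hcyc hne hm
    obtain ⟨C0⟩ := hne
    by_cases hcaseA : ∃ e ∈ G.edges, (e.filter (fun v => 2 ≤ G.degree v)).card ≤ 1
    · obtain ⟨e, he, hbr⟩ := hcaseA
      -- the branch set has at most one element
      have hknz : e.card = k := hunif e he
      -- B is nonempty : otherwise e is an isolated edge
      have hBne : (e.filter (fun v => 2 ≤ G.degree v)).Nonempty := by
        by_contra hcon
        rw [Finset.not_nonempty_iff_eq_empty] at hcon
        have hdeg : ∀ z ∈ e, ∀ f ∈ G.edges, z ∈ f → f = e := by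
          intro z hz f hf hzf
          have hz1 : G.degree z ≤ 1 := by
            by_contra hzc
            have : z ∈ e.filter (fun v => 2 ≤ G.degree v) :=
              Finset.mem_filter.mpr ⟨hz, by omega⟩
            rw [hcon] at this
            exact absurd this (Finset.notMem_empty z)
          exact deg_one_unique hz1 he hz hf hzf
        -- find an edge ≠ e on the cycle
        have h01 : C0.e 0 ≠ C0.e 1 := by
          intro hcon2
          have := C0.einj hcon2
          exact absurd (congrArg Fin.val this) (by simp)
        have hf : ∃ f ∈ G.edges, f ≠ e := by
          rcases eq_or_ne (C0.e 0) e with h | h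
          · exact ⟨C0.e 1, C0.he 1, by rw [← h]; exact h01.symm⟩
          · exact ⟨C0.e 0, C0.he 0, h⟩
        obtain ⟨f, hfE, hfne⟩ := hf
        have hdisj : ∀ x ∈ f, x ∉ e := by
          intro x hxf hxe
          exact hfne (hdeg x hxe f hfE hxf)
        obtain ⟨x, hxf⟩ : f.Nonempty := by
          rw [← Finset.card_pos, hunif f hfE]; omega
        obtain ⟨u, hue⟩ : e.Nonempty := by
          rw [← Finset.card_pos, hknz]; omega
        obtain ⟨p, hw⟩ := hconn u (hgood e he hue) x (hgood f hfE hxf)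
        exact walk_stuck hdeg (hdisj x hxf) p u hue hw
      obtain ⟨a, haB⟩ := hBne
      rw [Finset.mem_filter] at haB
      -- every other vertex of e has degree ≤ 1
      have hP : ∀ z ∈ e, z ≠ a → ∀ f ∈ G.edges, z ∈ f → f = e := by
        intro z hz hza f hf hzf
        have hz1 : G.degree z ≤ 1 := by
          by_contra hzc
          have hmem : z ∈ e.filter (fun v => 2 ≤ G.degree v) :=
            Finset.mem_filter.mpr ⟨hz, by omega⟩
          have hamem : a ∈ e.filter (fun v => 2 ≤ G.degree v) :=
            Finset.mem_filter.mpr ⟨haB.1, haB.2⟩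
          have : 2 ≤ (e.filter (fun v => 2 ≤ G.degree v)).card := by
            have hsub : {z, a} ⊆ e.filter (fun v => 2 ≤ G.degree v) := by
              intro g hg
              rw [Finset.mem_insert, Finset.mem_singleton] at hg
              rcases hg with rfl | rfl
              · exact hmem
              · exact hamem
            have := Finset.card_le_card hsub
            rwa [Finset.card_insert_of_notMem (by simpa using hza),
              Finset.card_singleton] at this
          omega
        exact deg_one_unique hz1 he hz hf hzf
      -- e is not on the cycle C0
      have heC0 : ∀ i, C0.e i ≠ e := by
        intro i hcon
        have hvi : C0.v i ∈ e := hcon ▸ C0.mem_fst i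
        have hvi1 : C0.v (i + 1) ∈ e := hcon ▸ C0.mem_snd i
        have hne01 : C0.v i ≠ C0.v (i + 1) := by
          intro hcon2
          have := C0.vinj hcon2
          have h4 : (1 : Fin (C0.n + 2)) = 0 :=
            add_left_cancel (a := i) (by rw [add_zero]; exact this.symm)
          exact absurd (congrArg Fin.val h4) (by simp)
        -- both have degree ≥ 2, so both are in the branch filter of e
        have h1 : C0.v i ∈ e.filter (fun v => 2 ≤ G.degree v) :=
          Finset.mem_filter.mpr ⟨hvi, cycle_vertex_deg C0 i⟩
        have h2 : C0.v (i+1) ∈ e.filter (fun v => 2 ≤ G.degree v) :=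
          Finset.mem_filter.mpr ⟨hvi1, cycle_vertex_deg C0 (i+1)⟩
        have hsub : {C0.v i, C0.v (i+1)} ⊆ e.filter (fun v => 2 ≤ G.degree v) := by
          intro g hg
          rw [Finset.mem_insert, Finset.mem_singleton] at hg
          rcases hg with rfl | rfl
          · exact h1
          · exact h2
        have := Finset.card_le_card hsub
        rw [Finset.card_insert_of_notMem (by simpa using hne01),
          Finset.card_singleton] at this
        omega
      -- the reduced hypergraph
      set G' : FinHypergraph α := ⟨G.verts \ e.erase a, G.edges.erase e⟩ with hG'
      have hliftW : ∀ u v p, G'.Walk u v p → G.Walk u v p := by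
        intro u v p hw
        induction hw with
        | nil x => exact Walk.nil x
        | cons w f hf huf hwf hneq hrest ihw =>
          exact Walk.cons w f (Finset.mem_of_mem_erase hf) huf hwf hneq ihw
      let hliftC : G'.Cycle → G.Cycle := fun C =>
        ⟨C.n, C.v, C.e, fun i => Finset.mem_of_mem_erase (C.he i), C.einj, C.vinj,
          C.mem_fst, C.mem_snd⟩
      have hliftC_edge : ∀ C : G'.Cycle, (hliftC C).edgeFinset = C.edgeFinset := by
        intro C
        rfl
      have hgood' : G'.Good := by
        intro f hf x hx
        rw [Finset.mem_sdiff]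
        constructor
        · exact hgood f (Finset.mem_of_mem_erase hf) hx
        · intro hxe
          rw [Finset.mem_erase] at hxe hf
          exact hf.1 (hP x hxe.2 hxe.1 f hf.2 hx)
      have hunif' : G'.Uniform k := fun f hf => hunif f (Finset.mem_of_mem_erase hf)
      have hconn' : G'.Connected := by
        intro u hu v hv
        rw [hG'] at hu hv
        simp only [Finset.mem_sdiff, Finset.mem_erase] at hu hv
        obtain ⟨p, hw⟩ := hconn u hu.1 v hv.1
        obtain ⟨q, hq⟩ := walk_surgery he hP p u v hw
          (fun hue => by by_contra hc; exact hu.2 ⟨hc, hue⟩)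
          (fun hve => by by_contra hc; exact hv.2 ⟨hc, hve⟩)
        exact ⟨q, walk_congr (G₁ := ⟨G.verts, G.edges.erase e⟩) (G₂ := G') rfl hq⟩
      have huniq' : ∀ C C' : G'.Cycle, C.edgeFinset = C'.edgeFinset := by
        intro C C'
        rw [← hliftC_edge C, ← hliftC_edge C']
        exact huniq _ _
      have hcyc' : ∀ C : G'.Cycle, 3 ≤ C.length := fun C => hcyc (hliftC C)
      have hne' : Nonempty G'.Cycle := by
        refine ⟨⟨C0.n, C0.v, C0.e, fun i => Finset.mem_erase.mpr ⟨heC0 i, C0.he i⟩,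
          C0.einj, C0.vinj, C0.mem_fst, C0.mem_snd⟩⟩
      have hm' : G'.edges.card = m - 1 := by
        show (G.edges.erase e).card = m - 1
        rw [Finset.card_erase_of_mem he, hm]
      have hm1 : 1 ≤ m := by
        rw [← hm]
        exact Finset.card_pos.mpr ⟨e, he⟩
      have hcard' := ih (m - 1) (by omega) G' hgood' hunif' hconn' huniq' hcyc' hne' hm'
      -- now count
      have hPsub : e.erase a ⊆ G.verts := fun x hx =>
        hgood e he (Finset.mem_of_mem_erase hx)
      have : (G.verts \ e.erase a).card = G.verts.card - (k - 1) := by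
        rw [Finset.card_sdiff_of_subset hPsub, Finset.card_erase_of_mem haB.1, hknz]
      have hVcard : G.verts.card - (k - 1) = (m - 1) * (k - 1) := by
        rw [← this]
        exact hcard'
      have hklear : k - 1 ≤ G.verts.card := by
        have h5 : e.erase a ⊆ G.verts := hPsub
        have := Finset.card_le_card hPsub
        rw [Finset.card_erase_of_mem haB.1, hknz] at this
        omega
      have : G.verts.card = (m - 1) * (k - 1) + (k - 1) := by omega
      rw [this]
      have : (m - 1) * (k - 1) + (k - 1) = ((m - 1) + 1) * (k - 1) := by ring
      rw [this]
      congr 1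
      omega
    · push_neg at hcaseA
      have hEF := caseB_edges_eq k hk hgood hunif hconn huniq hcyc C0
        (fun e heE => by have := hcaseA e heE; omega)
      rw [← hm]
      exact count_loose k hk hgood hunif hconn huniq hcyc C0 hEF

end FinHypergraph


/-- For a `k`-uniform unicyclic hypergraph of size `m` whose unique cycle has
length at least `3` (`k ≥ 3`), `σ(G) ≥ (k-1)m[(k-1)m - 1 - k/2]`, with equality iff the
diameter of `G` is at most `2`. -/
theorem stmt3 {α : Type} [DecidableEq α] (k m : ℕ) (hk : 3 ≤ k) (G : FinHypergraph α)
    (hgood : G.Good) (hunif : G.Uniform k) (huni : G.Unicyclic)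
    (hsize : G.edges.card = m) (hcyc : ∀ C : G.Cycle, 3 ≤ C.length) :
    ((k : ℝ) - 1) * m * (((k : ℝ) - 1) * m - 1 - (k : ℝ) / 2) ≤ (G.trans : ℝ) ∧
    ((G.trans : ℝ) = ((k : ℝ) - 1) * m * (((k : ℝ) - 1) * m - 1 - (k : ℝ) / 2) ↔
      G.diam ≤ 2) := by
  classical
  obtain ⟨hconn, hne, huniq⟩ := huni
  have hcount : G.verts.card = m * (k - 1) := by
    exact card_verts_eq k hk m G hgood hunif hconn huniq hcyc hne hsize
  set V := G.verts with hV
  set n := V.card with hn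
  -- basic distance facts
  have hNE : ∀ u ∈ V, ∀ v ∈ V, {p | G.Walk u v p}.Nonempty := by
    intro u hu v hv
    exact hconn u hu v hv
  have hpos : ∀ q ∈ V.offDiag, 1 ≤ G.dist q.1 q.2 := by
    intro q hq
    rw [Finset.mem_offDiag] at hq
    by_contra hc
    push_neg at hc
    rw [Nat.lt_one_iff] at hc
    exact hq.2.2 (eq_of_dist_eq_zero (hNE q.1 hq.1 q.2 hq.2.1) hc)
  set A1 := V.offDiag.filter (fun q => G.dist q.1 q.2 = 1) with hA1
  set A2 := V.offDiag.filter (fun q => ¬ G.dist q.1 q.2 = 1) with hA2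
  have hcards : A1.card + A2.card = V.offDiag.card :=
    Finset.card_filter_add_card_filter_not _
  have hoffcard : V.offDiag.card = n * n - n := by rw [Finset.offDiag_card, ← hn]
  -- counting pairs at distance one
  have hA1eq : A1 = G.edges.biUnion (fun e => e.offDiag) := by
    ext q
    rw [hA1, Finset.mem_filter, Finset.mem_biUnion, Finset.mem_offDiag]
    constructor
    · rintro ⟨⟨hu, hv, huv⟩, hd⟩
      obtain ⟨-, e, heE, hue, hve⟩ := (dist_eq_one_iff (hNE q.1 hu q.2 hv)).mp hd
      exact ⟨e, heE, Finset.mem_offDiag.mpr ⟨hue, hve, huv⟩⟩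
    · rintro ⟨e, heE, hq⟩
      rw [Finset.mem_offDiag] at hq
      obtain ⟨hue, hve, huv⟩ := hq
      refine ⟨⟨hgood e heE hue, hgood e heE hve, huv⟩, ?_⟩
      exact (dist_eq_one_iff ⟨1, Walk.cons q.2 e heE hue hve huv (Walk.nil q.2)⟩).mpr
        ⟨huv, e, heE, hue, hve⟩
  have hA1card : A1.card = m * (k * k - k) := by
    rw [hA1eq, Finset.card_biUnion, ← hsize]
    · rw [Finset.sum_congr rfl (fun e heE => ?_), Finset.sum_const, smul_eq_mul]
      rw [Finset.offDiag_card, hunif e heE]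
    · intro e heE f hfE hef
      show Disjoint e.offDiag f.offDiag
      rw [Finset.disjoint_left]
      intro q hqe hqf
      rw [Finset.mem_offDiag] at hqe hqf
      exact (edge_inter hcyc heE hfE hef hqe.1 hqf.1 hqe.2.1 hqf.2.1 hqe.2.2).elim
  -- the sum of distances
  set S := ∑ u ∈ V, ∑ v ∈ V, G.dist u v with hS
  have htrans : G.trans = S / 2 := rfl
  have hSdvd : 2 ∣ S := even_double_sum V _ (fun a b => FinHypergraph.dist_comm a b) (fun a => FinHypergraph.dist_self a)
  have hSP : S = ∑ q ∈ V ×ˢ V, G.dist q.1 q.2 := by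
    rw [hS, Finset.sum_product]
  have hSoff : S = ∑ q ∈ V.offDiag, G.dist q.1 q.2 := by
    rw [hSP, ← Finset.sum_filter_add_sum_filter_not (V ×ˢ V) (fun q => q.1 = q.2)]
    have h1 : ∑ q ∈ (V ×ˢ V).filter (fun q => q.1 = q.2), G.dist q.1 q.2 = 0 := by
      apply Finset.sum_eq_zero
      intro q hq
      rw [Finset.mem_filter] at hq
      rw [hq.2]
      exact FinHypergraph.dist_self _
    rw [h1, zero_add]
    have h2 : (V ×ˢ V).filter (fun x => ¬ x.1 = x.2) = V.offDiag := by
      ext q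
      simp only [Finset.mem_filter, Finset.mem_product, Finset.mem_offDiag, ne_eq]
      tauto
    rw [h2]
  have hA12 : V.offDiag = A1 ∪ A2 := by
    rw [hA1, hA2, Finset.filter_union_filter_not_eq]
  have hSsplit : S = A1.card + ∑ q ∈ A2, G.dist q.1 q.2 := by
    rw [hSoff, hA12, Finset.sum_union]
    · congr 1
      rw [Finset.sum_congr rfl (fun q hq => ?_), Finset.sum_const, smul_eq_mul, mul_one]
      rw [hA1, Finset.mem_filter] at hq
      exact hq.2
    · exact Finset.disjoint_filter_filter_not _ _ _
  have hA2ge : ∀ q ∈ A2, 2 ≤ G.dist q.1 q.2 := by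
    intro q hq
    rw [hA2, Finset.mem_filter] at hq
    have := hpos q hq.1
    omega
  have hA2sum : 2 * A2.card ≤ ∑ q ∈ A2, G.dist q.1 q.2 := by
    calc 2 * A2.card = ∑ _q ∈ A2, 2 := by rw [Finset.sum_const, smul_eq_mul, mul_comm]
    _ ≤ ∑ q ∈ A2, G.dist q.1 q.2 := Finset.sum_le_sum hA2ge
  -- the key equivalence : sum attains the bound iff all A2-distances are 2 iff diam ≤ 2
  have hdiam_iff : (∑ q ∈ A2, G.dist q.1 q.2 = 2 * A2.card) ↔ G.diam ≤ 2 := by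
    constructor
    · intro hsum
      have hall : ∀ q ∈ A2, G.dist q.1 q.2 = 2 := by
        by_contra hcon
        push_neg at hcon
        obtain ⟨q0, hq0, hq0ne⟩ := hcon
        have hstrict : ∑ _q ∈ A2, 2 < ∑ q ∈ A2, G.dist q.1 q.2 := by
          apply Finset.sum_lt_sum hA2ge
          exact ⟨q0, hq0, by have := hA2ge q0 hq0; omega⟩
        rw [Finset.sum_const, smul_eq_mul, mul_comm] at hstrict
        omega
      show V.sup (fun u => V.sup (fun v => G.dist u v)) ≤ 2
      apply Finset.sup_le
      intro u hu
      apply Finset.sup_le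
      intro v hv
      rcases eq_or_ne u v with rfl | huv
      · rw [FinHypergraph.dist_self]; omega
      rcases eq_or_ne (G.dist u v) 1 with h1 | h1
      · omega
      · have : (u, v) ∈ A2 := by
          rw [hA2, Finset.mem_filter, Finset.mem_offDiag]
          exact ⟨⟨hu, hv, huv⟩, h1⟩
        have h3 : G.dist u v = 2 := hall (u, v) this
        omega
    · intro hdiam
      have hle : ∀ q ∈ A2, G.dist q.1 q.2 ≤ 2 := by
        intro q hq
        rw [hA2, Finset.mem_filter, Finset.mem_offDiag] at hq
        calc G.dist q.1 q.2 ≤ V.sup (fun v => G.dist q.1 v) :=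
              Finset.le_sup (f := fun v => G.dist q.1 v) hq.1.2.1
        _ ≤ V.sup (fun u => V.sup (fun v => G.dist u v)) :=
              Finset.le_sup (f := fun u => V.sup (fun v => G.dist u v)) hq.1.1
        _ ≤ 2 := hdiam
      apply le_antisymm
      · apply Finset.sum_le_sum at hle
        calc ∑ q ∈ A2, G.dist q.1 q.2 ≤ ∑ _q ∈ A2, 2 := hle
        _ = 2 * A2.card := by rw [Finset.sum_const, smul_eq_mul, mul_comm]
      · exact hA2sum
  -- now the real arithmetic
  obtain ⟨T, hT⟩ := hSdvd
  have htransT : G.trans = T := by rw [htrans, hT]; omega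
  have hkk : k ≤ k * k := Nat.le_mul_of_pos_left k (by omega)
  have hnn : n ≤ n * n := by
    rcases Nat.eq_zero_or_pos n with h | h
    · simp [h]
    · exact Nat.le_mul_of_pos_left n h
  have hcastA1 : (A1.card : ℝ) = m * ((k:ℝ) * k - k) := by
    rw [hA1card]
    push_cast [Nat.cast_sub hkk]
    ring
  have hcastn : (n : ℝ) = m * ((k:ℝ) - 1) := by
    rw [hcount]
    push_cast [Nat.cast_sub (by omega : 1 ≤ k)]
    ring
  have hcastoff : (A1.card : ℝ) + A2.card = (n:ℝ) * n - n := by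
    have := hcards
    rw [hoffcard] at this
    have h2 : ((A1.card + A2.card : ℕ) : ℝ) = ((n * n - n : ℕ) : ℝ) := by rw [this]
    push_cast [Nat.cast_sub hnn] at h2
    linarith
  -- 2 * RHS = A1.card + 2 * A2.card
  have hkey : 2 * (((k : ℝ) - 1) * m * (((k : ℝ) - 1) * m - 1 - (k : ℝ) / 2))
      = (A1.card : ℝ) + 2 * A2.card := by
    have e1 : (A2.card : ℝ) = (n:ℝ) * n - n - A1.card := by linarith
    rw [e1, hcastA1, hcastn]
    ring
  have hsum_cast : (S : ℝ) = (A1.card : ℝ) + (∑ q ∈ A2, G.dist q.1 q.2 : ℕ) := by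
    rw [hSsplit]
    push_cast
    ring
  have htrans2 : (S : ℝ) = 2 * (G.trans : ℝ) := by
    rw [htransT, hT]
    push_cast
    ring
  constructor
  · have hge : (A1.card : ℝ) + 2 * A2.card ≤ (S : ℝ) := by
      rw [hsum_cast]
      have := hA2sum
      have hc : (2 * A2.card : ℝ) ≤ ((∑ q ∈ A2, G.dist q.1 q.2 : ℕ) : ℝ) := by
        exact_mod_cast this
      push_cast at hc ⊢
      linarith
    rw [← hkey] at hge
    rw [htrans2] at hge
    linarith
  · constructor
    · intro heq
      have hSval : (S : ℝ) = (A1.card : ℝ) + 2 * A2.card := by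
        rw [htrans2, heq, hkey]
      rw [hsum_cast] at hSval
      have : ((∑ q ∈ A2, G.dist q.1 q.2 : ℕ) : ℝ) = ((2 * A2.card : ℕ) : ℝ) := by
        push_cast at hSval ⊢
        linarith
      exact hdiam_iff.mp (by exact_mod_cast this)
    · intro hdiam
      have hsum := hdiam_iff.mpr hdiam
      have : (S : ℝ) = (A1.card : ℝ) + 2 * A2.card := by
        rw [hsum_cast, hsum]
        push_cast
        ring
      rw [htrans2] at this
      linarith [hkey]
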